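/- For every 1 < p < ∞, the polynomial equation (p-1)x^p - p x^{p-1} - 1 = 0 has a unique positive solution. -/

import Mathlib

private lemma hasDerivAt_f (p : ℝ) (hp : 1 < p) {x : ℝ} (hx : 0 < x) :
    HasDerivAt (fun x : ℝ => (p - 1) * x ^ p - p * x ^ (p - 1) - 1)
      (p * (p - 1) * (x ^ (p - 1) - x ^ (p - 2))) x := by
  have h1 : HasDerivAt (fun x : ℝ => x ^ p) (p * x ^ (p - 1)) x :=
    Real.hasDerivAt_rpow_const (Or.inl hx.ne')
  have h2 : HasDerivAt (fun x : ℝ => x ^ (p - 1)) ((p - 1) * x ^ (p - 1 - 1)) x :=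
    Real.hasDerivAt_rpow_const (Or.inl hx.ne')
  have := ((h1.const_mul (p - 1)).sub (h2.const_mul p)).sub_const 1
  refine this.congr_deriv ?_
  rw [show p - 1 - 1 = p - 2 by ring]; ring

private lemma f_smono (p : ℝ) (hp : 1 < p) :
    StrictMonoOn (fun x : ℝ => (p - 1) * x ^ p - p * x ^ (p - 1) - 1) (Set.Ici 1) := by
  apply strictMonoOn_of_hasDerivWithinAt_pos (convex_Ici 1)
  · exact fun x hx =>
      ((hasDerivAt_f p hp (lt_of_lt_of_le one_pos hx)).continuousAt).continuousWithinAt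
  · intro x hx
    rw [interior_Ici] at hx
    exact (hasDerivAt_f p hp (lt_trans one_pos hx)).hasDerivWithinAt
  · intro x hx
    rw [interior_Ici] at hx
    have hx1 : (1:ℝ) < x := hx
    have h : x ^ (p - 2) < x ^ (p - 1) :=
      Real.rpow_lt_rpow_of_exponent_lt hx1 (by linarith)
    have hpp : 0 < p * (p - 1) := mul_pos (by linarith) (by linarith)
    exact mul_pos hpp (by linarith)

private lemma f_neg_of_le_one (p : ℝ) (hp : 1 < p) {x : ℝ} (hx0 : 0 < x) (hx1 : x ≤ 1) :
    (p - 1) * x ^ p - p * x ^ (p - 1) - 1 < 0 := by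
  have h1 : x ^ p ≤ x ^ (p - 1) :=
    Real.rpow_le_rpow_of_exponent_ge hx0 hx1 (by linarith)
  have h2 : 0 < x ^ (p - 1) := Real.rpow_pos_of_pos hx0 _
  nlinarith

theorem unique_positive_root (p : ℝ) (hp : 1 < p) :
    ∃! x : ℝ, 0 < x ∧ (p - 1) * x ^ p - p * x ^ (p - 1) - 1 = 0 := by
  set f : ℝ → ℝ := fun x => (p - 1) * x ^ p - p * x ^ (p - 1) - 1 with hf
  set M : ℝ := max 1 ((p + 1) / (p - 1)) with hM
  have hM1 : (1:ℝ) ≤ M := le_max_left _ _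
  have hM0 : (0:ℝ) < M := lt_of_lt_of_le one_pos hM1
  have hp1 : (0:ℝ) < p - 1 := by linarith
  have hMge : (p + 1) / (p - 1) ≤ M := le_max_right _ _
  have hMp : p + 1 ≤ (p - 1) * M := by
    rw [div_le_iff₀ hp1] at hMge; linarith [hMge]
  have hf1 : f 1 = -2 := by
    simp only [hf, Real.one_rpow]; ring
  have hfM : 0 ≤ f M := by
    have hMsplit : M ^ p = M * M ^ (p - 1) := by
      have h : M ^ p = M ^ (1 + (p - 1)) := by ring_nf
      rw [h, Real.rpow_add hM0, Real.rpow_one]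
    have hMp1 : 1 ≤ M ^ (p - 1) := Real.one_le_rpow hM1 (le_of_lt hp1)
    have hpos : 0 < M ^ (p - 1) := Real.rpow_pos_of_pos hM0 _
    simp only [hf]
    rw [hMsplit]
    nlinarith
  -- continuity of f on [1, M]
  have hcont : ContinuousOn f (Set.Icc 1 M) := fun x hx =>
    ((hasDerivAt_f p hp (lt_of_lt_of_le one_pos hx.1)).continuousAt).continuousWithinAt
  have hIVT := intermediate_value_Icc hM1 hcont
  have h0mem : (0:ℝ) ∈ Set.Icc (f 1) (f M) := by
    constructor
    · rw [hf1]; linarith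
    · exact hfM
  obtain ⟨x, hxmem, hfx⟩ := hIVT h0mem
  refine ⟨x, ⟨lt_of_lt_of_le one_pos hxmem.1, hfx⟩, ?_⟩
  rintro y ⟨hy0, hfy⟩
  -- y must be > 1
  have hy1 : 1 ≤ y := by
    by_contra h
    push_neg at h
    exact absurd hfy (ne_of_lt (f_neg_of_le_one p hp hy0 h.le))
  have hx1 : 1 ≤ x := hxmem.1
  exact (f_smono p hp).injOn (Set.mem_Ici.mpr hy1) (Set.mem_Ici.mpr hx1) (by rw [hfy]; exact hfx.symm)
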